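/- If the mean number of spilled elements per throw satisfies α ≤ 1/(2e) and bucket capacity is c = ⌈log₂ log₂ n⌉, then the per-round overflow recursion x_{i+1} ≤ n / (2^{(c+1)^{i+1}} · (log₂ n)^{(c+1)^i} · e) starting from x_1 ≤ n/(2^{c+1} e log₂ n) implies that after O(log₂ log₂ n) rounds the overflow is less than 1. Formally: for n ≥ some absolute constant, there exists i ≤ C · log₂ log₂ n (for an absolute constant C) such that n / (2^{(c+1)^i} · (log₂ n)^{(c+1)^{i−1}} · e) < 1. -/
import Mathlib


/-- The per-round overflow bound `n / (2^{(c+1)^i} (log₂ n)^{(c+1)^{i-1}} e)` drops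
below 1 within `log₂ log₂ n + 1` rounds, for `c = ⌈log₂ log₂ n⌉` and `n ≥ 16`. -/
theorem overflow_recursion_terminates (n : ℕ) (hn : 16 ≤ n)
    (c : ℕ) (hc : c = ⌈Real.logb 2 (Real.logb 2 (n : ℝ))⌉₊) :
    ∃ i : ℕ, 1 ≤ i ∧ (i : ℝ) ≤ Real.logb 2 (Real.logb 2 (n : ℝ)) + 1 ∧
      (n : ℝ) / ((2 : ℝ) ^ ((c + 1) ^ i) *
        (Real.logb 2 (n : ℝ)) ^ ((c + 1) ^ (i - 1)) * Real.exp 1) < 1 := by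
  have hnpos : (0:ℝ) < n := by positivity
  have hn16 : (16:ℝ) ≤ (n:ℝ) := by exact_mod_cast hn
  set L := Real.logb 2 (n : ℝ) with hL
  have hb : (1:ℝ) < 2 := one_lt_two
  have hL4 : (4:ℝ) ≤ L := by
    rw [hL, Real.le_logb_iff_rpow_le hb hnpos]
    calc (2:ℝ) ^ (4:ℝ) = (2:ℝ) ^ (4:ℕ) := by
          rw [← Real.rpow_natCast]; norm_num
      _ = 16 := by norm_num
      _ ≤ n := hn16
  have hLpos : (0:ℝ) < L := by linarith
  have hLL2 : (2:ℝ) ≤ Real.logb 2 L := by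
    rw [Real.le_logb_iff_rpow_le hb hLpos]
    calc (2:ℝ) ^ (2:ℝ) = (2:ℝ) ^ (2:ℕ) := by
          rw [← Real.rpow_natCast]; norm_num
      _ = 4 := by norm_num
      _ ≤ L := hL4
  have hLLpos : (0:ℝ) < Real.logb 2 L := by linarith
  set i := ⌈Real.logb 2 L⌉₊ with hi
  have hi1 : 1 ≤ i := Nat.one_le_ceil_iff.mpr hLLpos
  have hiub : (i:ℝ) ≤ Real.logb 2 L + 1 :=
    le_of_lt (Nat.ceil_lt_add_one hLLpos.le)
  refine ⟨i, hi1, hiub, ?_⟩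
  -- c + 1 ≥ 2
  have hc2 : 2 ≤ c + 1 := by
    have : 1 ≤ c := by rw [hc]; exact hi1
    omega
  -- key: n ≤ 2 ^ ((c+1)^i)
  have hkey : (n:ℝ) ≤ (2:ℝ) ^ ((c + 1) ^ i) := by
    have hpow : 2 ^ i ≤ (c + 1) ^ i := Nat.pow_le_pow_left hc2 i
    have h1 : (2:ℝ) ^ (2 ^ i) ≤ (2:ℝ) ^ ((c + 1) ^ i) :=
      pow_le_pow_right₀ hb.le hpow
    have h2 : L ≤ ((2 ^ i : ℕ) : ℝ) := by
      have hle : Real.logb 2 L ≤ (i:ℝ) := Nat.le_ceil _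
      have := Real.rpow_le_rpow_left_iff hb |>.mpr hle
      rw [Real.rpow_logb two_pos (by norm_num) hLpos] at this
      calc L ≤ (2:ℝ) ^ (i:ℝ) := this
        _ = ((2 ^ i : ℕ) : ℝ) := by
            rw [Real.rpow_natCast]; push_cast; ring
    have h3 : (n:ℝ) ≤ (2:ℝ) ^ (2 ^ i) := by
      have : (n:ℝ) = (2:ℝ) ^ L := by
        rw [hL, Real.rpow_logb two_pos (by norm_num) hnpos]
      rw [this]
      calc (2:ℝ) ^ L ≤ (2:ℝ) ^ (((2 ^ i : ℕ)):ℝ) :=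
            Real.rpow_le_rpow_of_exponent_le hb.le h2
        _ = (2:ℝ) ^ (2 ^ i) := by rw [Real.rpow_natCast]
    exact h3.trans h1
  have hLk : (1:ℝ) ≤ L ^ ((c + 1) ^ (i - 1)) :=
    one_le_pow₀ (by linarith)
  have he : (1:ℝ) < Real.exp 1 := by
    have := Real.add_one_lt_exp (x := 1) one_ne_zero
    linarith
  rw [div_lt_one (by positivity)]
  calc (n:ℝ) < (n:ℝ) * 1 * Real.exp 1 := by nlinarith
    _ ≤ (2:ℝ) ^ ((c + 1) ^ i) * L ^ ((c + 1) ^ (i - 1)) * Real.exp 1 := by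
        apply mul_le_mul_of_nonneg_right _ (Real.exp_pos 1).le
        exact mul_le_mul hkey hLk zero_le_one (by positivity)
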